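/- (Proposition 3, horizontal variant: ULA-to-URA expansion.) Let N, M ≥ 1, let (u, v) be a Golay complementary pair of unimodular sequences of length N, and let w_PA, w_PB : {0,…,M−1} → ℂ be arbitrary sequences. Define N×2M matrices W_A, W_B by: for 0 ≤ n ≤ N−1 and 0 ≤ m ≤ M−1, W_A(n,m) = u(n)·w_PA(m), W_A(n,M+m) = −v(n)·conj(w_PB(M−1−m)), W_B(n,m) = u(n)·w_PB(m), W_B(n,M+m) = v(n)·conj(w_PA(M−1−m)). Then for all ψ_y, ψ_z ∈ ℝ, |F_{W_A}(ψ_y,ψ_z)|² + |F_{W_B}(ψ_y,ψ_z)|² = 2N·( |F_{w_PA}(ψ_y)|² + |F_{w_PB}(ψ_y)|² ), where F_{w_PA}, F_{w_PB} denote one-dimensional array factors. -/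

import Mathlib

/-- The one-dimensional array factor of a length-`M` sequence `u` at spatial
frequency `ψ`: `F_u(ψ) = Σ_{m=0}^{M-1} u(m) · exp(i·m·ψ)`. -/
noncomputable def arrayFactor (M : ℕ) (u : ℕ → ℂ) (ψ : ℝ) : ℂ :=
  ∑ m ∈ Finset.range M, u m * Complex.exp (Complex.I * (m : ℂ) * (ψ : ℂ))

/-- The aperiodic autocorrelation of a length-`M` sequence `u` at shift `τ`:
`R_u(τ) = Σ_{m=0}^{M-1-τ} u(m) · conj(u(m+τ))`. -/
noncomputable def aacf (M : ℕ) (u : ℕ → ℂ) (τ : ℕ) : ℂ :=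
  ∑ m ∈ Finset.range (M - τ), u m * (starRingEnd ℂ) (u (m + τ))

/-- The two-dimensional array factor of an `N×M` matrix `W` at `(ψ_y, ψ_z)`:
`F_W(ψ_y,ψ_z) = Σ_{n=0}^{N-1} Σ_{m=0}^{M-1} W(n,m) · exp(i·(n·ψ_z + m·ψ_y))`. -/
noncomputable def arrayFactor2 (N M : ℕ) (W : ℕ → ℕ → ℂ) (ψy ψz : ℝ) : ℂ :=
  ∑ n ∈ Finset.range N, ∑ m ∈ Finset.range M,
    W n m * Complex.exp (Complex.I * ((n : ℂ) * (ψz : ℂ) + (m : ℂ) * (ψy : ℂ)))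

/-- The two-dimensional aperiodic autocorrelation of an `N×M` matrix `W` at integer
shifts `(τ_n, τ_m)`: the sum of `W(n,m)·conj(W(n+τ_n, m+τ_m))` over all pairs
`(n,m)` with `0 ≤ n, n+τ_n ≤ N−1` and `0 ≤ m, m+τ_m ≤ M−1`. -/
noncomputable def aacf2 (N M : ℕ) (W : ℕ → ℕ → ℂ) (τn τm : ℤ) : ℂ :=
  ∑ n ∈ Finset.range N, ∑ m ∈ Finset.range M,
    if 0 ≤ (n : ℤ) + τn ∧ (n : ℤ) + τn < (N : ℤ) ∧
        0 ≤ (m : ℤ) + τm ∧ (m : ℤ) + τm < (M : ℤ) then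
      W n m * (starRingEnd ℂ) (W ((n : ℤ) + τn).toNat ((m : ℤ) + τm).toNat)
    else 0

/-- `(U, V)` is a Golay complementary array pair of `N×M` matrices: the sum of their
two-dimensional aperiodic autocorrelations vanishes at every nonzero shift. -/
def IsGolayArrayPair (N M : ℕ) (U V : ℕ → ℕ → ℂ) : Prop :=
  ∀ τn τm : ℤ, |τn| ≤ (N : ℤ) - 1 → |τm| ≤ (M : ℤ) - 1 → ¬(τn = 0 ∧ τm = 0) →
    aacf2 N M U τn τm + aacf2 N M V τn τm = 0


open Finset Complex in
private lemma pair_split (N : ℕ) (f : ℕ → ℕ → ℂ) :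
    ∑ n ∈ range N, ∑ m ∈ range N, f n m
      = (∑ n ∈ range N, f n n)
        + ∑ t ∈ range (N - 1), ∑ n ∈ range (N - (t + 1)),
            (f n (n + (t + 1)) + f (n + (t + 1)) n) := by
  induction N with
  | zero => simp
  | succ N ih =>
    have hL : ∑ n ∈ range (N + 1), ∑ m ∈ range (N + 1), f n m
        = (∑ n ∈ range N, ∑ m ∈ range N, f n m)
          + ((∑ n ∈ range N, (f n N + f N n)) + f N N) := by
      rw [Finset.sum_range_succ]
      simp only [Finset.sum_range_succ, Finset.sum_add_distrib]
      ring
    have hsub : ∑ t ∈ range N, ∑ n ∈ range (N - (t + 1)),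
          (f n (n + (t + 1)) + f (n + (t + 1)) n)
        = ∑ t ∈ range (N - 1), ∑ n ∈ range (N - (t + 1)),
          (f n (n + (t + 1)) + f (n + (t + 1)) n) := by
      refine (Finset.sum_subset ?_ ?_).symm
      · intro t ht
        simp only [Finset.mem_range] at *
        omega
      · intro t ht ht'
        simp only [Finset.mem_range] at *
        have : N - (t + 1) = 0 := by omega
        simp [this]
    have hR : ∑ t ∈ range (N + 1 - 1), ∑ n ∈ range (N + 1 - (t + 1)),
          (f n (n + (t + 1)) + f (n + (t + 1)) n)
        = (∑ t ∈ range (N - 1), ∑ n ∈ range (N - (t + 1)),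
            (f n (n + (t + 1)) + f (n + (t + 1)) n))
          + ∑ n ∈ range N, (f n N + f N n) := by
      have e1 : ∀ t ∈ range N, ∑ n ∈ range (N + 1 - (t + 1)),
            (f n (n + (t + 1)) + f (n + (t + 1)) n)
          = (∑ n ∈ range (N - (t + 1)), (f n (n + (t + 1)) + f (n + (t + 1)) n))
            + (f (N - (t + 1)) (N - (t + 1) + (t + 1)) + f (N - (t + 1) + (t + 1)) (N - (t + 1))) := by
        intro t ht
        simp only [Finset.mem_range] at ht
        have : N + 1 - (t + 1) = (N - (t + 1)) + 1 := by omega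
        rw [this, Finset.sum_range_succ]
      rw [Nat.add_sub_cancel, Finset.sum_congr rfl e1, Finset.sum_add_distrib, hsub]
      congr 1
      have : ∀ t ∈ range N, (f (N - (t + 1)) (N - (t + 1) + (t + 1)) + f (N - (t + 1) + (t + 1)) (N - (t + 1)))
          = (fun n => f n N + f N n) (N - 1 - t) := by
        intro t ht
        simp only [Finset.mem_range] at ht
        have h1 : N - (t + 1) + (t + 1) = N := by omega
        have h2 : N - (t + 1) = N - 1 - t := by omega
        rw [h1, h2]
      rw [Finset.sum_congr rfl this]
      exact Finset.sum_range_reflect (fun n => f n N + f N n) N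
    rw [hL, hR, ih, Finset.sum_range_succ]
    ring

open Finset Complex in
private lemma conj_term (x : ℂ) (a : ℕ) (ψ : ℝ) :
    (starRingEnd ℂ) (x * Complex.exp (Complex.I * (a : ℂ) * (ψ : ℂ)))
      = (starRingEnd ℂ) x * Complex.exp (-(Complex.I * (a : ℂ) * (ψ : ℂ))) := by
  rw [map_mul, ← Complex.exp_conj]
  congr 2
  simp [Complex.conj_ofReal]


open Finset Complex in
private lemma golay_power (N : ℕ) (u v : ℕ → ℂ) (ψz : ℝ)
    (hu : ∀ n < N, ‖u n‖ = 1) (hv : ∀ n < N, ‖v n‖ = 1)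
    (hGolay : ∀ τ, 1 ≤ τ → τ < N → aacf N u τ + aacf N v τ = 0) :
    arrayFactor N u ψz * (starRingEnd ℂ) (arrayFactor N u ψz)
      + arrayFactor N v ψz * (starRingEnd ℂ) (arrayFactor N v ψz) = 2 * N := by
  set a : ℕ → ℂ := fun n => u n * Complex.exp (Complex.I * (n : ℂ) * (ψz : ℂ)) with ha
  set b : ℕ → ℂ := fun n => v n * Complex.exp (Complex.I * (n : ℂ) * (ψz : ℂ)) with hb
  have expand : arrayFactor N u ψz * (starRingEnd ℂ) (arrayFactor N u ψz)
      + arrayFactor N v ψz * (starRingEnd ℂ) (arrayFactor N v ψz)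
      = ∑ n ∈ range N, ∑ m ∈ range N,
          (a n * (starRingEnd ℂ) (a m) + b n * (starRingEnd ℂ) (b m)) := by
    simp only [arrayFactor, map_sum, Finset.sum_mul_sum, Finset.sum_add_distrib]
    rfl
  rw [expand, pair_split]
  have hdiag : ∑ n ∈ range N,
      (a n * (starRingEnd ℂ) (a n) + b n * (starRingEnd ℂ) (b n)) = 2 * N := by
    have : ∀ n ∈ range N,
        (a n * (starRingEnd ℂ) (a n) + b n * (starRingEnd ℂ) (b n)) = 2 := by
      intro n hn
      simp only [Finset.mem_range] at hn
      have habs : ∀ x : ℂ, ‖x‖ = 1 →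
          (x * Complex.exp (Complex.I * (n : ℂ) * (ψz : ℂ)))
            * (starRingEnd ℂ) (x * Complex.exp (Complex.I * (n : ℂ) * (ψz : ℂ))) = 1 := by
        intro x hx
        rw [Complex.mul_conj]
        have : ‖x * Complex.exp (Complex.I * (n : ℂ) * (ψz : ℂ))‖ = 1 := by
          rw [norm_mul, hx, Complex.norm_exp]
          simp
        rw [Complex.normSq_eq_norm_sq, this]
        norm_num
      have h1 := habs (u n) (hu n hn)
      have h2 := habs (v n) (hv n hn)
      simp only [ha, hb]
      rw [h1, h2]; norm_num
    rw [Finset.sum_congr rfl this]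
    simp [Finset.sum_const, mul_comm]
  have hoff : ∑ t ∈ range (N - 1), ∑ n ∈ range (N - (t + 1)),
      ((a n * (starRingEnd ℂ) (a (n + (t + 1))) + b n * (starRingEnd ℂ) (b (n + (t + 1))))
        + (a (n + (t + 1)) * (starRingEnd ℂ) (a n) + b (n + (t + 1)) * (starRingEnd ℂ) (b n))) = 0 := by
    refine Finset.sum_eq_zero (fun t ht => ?_)
    simp only [Finset.mem_range] at ht
    set τ := t + 1 with hτ
    set E : ℂ := Complex.exp (-(Complex.I * (τ : ℂ) * (ψz : ℂ))) with hE
    have key : ∀ x : ℕ → ℂ, ∀ n : ℕ,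
        (x n * Complex.exp (Complex.I * (n : ℂ) * (ψz : ℂ)))
          * (starRingEnd ℂ) (x (n + τ) * Complex.exp (Complex.I * ((n + τ : ℕ) : ℂ) * (ψz : ℂ)))
        = (x n * (starRingEnd ℂ) (x (n + τ))) * E := by
      intro x n
      rw [conj_term]
      rw [show (x n * Complex.exp (Complex.I * (n : ℂ) * (ψz : ℂ))) *
          ((starRingEnd ℂ) (x (n + τ)) * Complex.exp (-(Complex.I * ((n + τ : ℕ) : ℂ) * (ψz : ℂ))))
          = (x n * (starRingEnd ℂ) (x (n + τ))) *
            (Complex.exp (Complex.I * (n : ℂ) * (ψz : ℂ)) * Complex.exp (-(Complex.I * ((n + τ : ℕ) : ℂ) * (ψz : ℂ)))) by ring]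
      congr 1
      rw [← Complex.exp_add, hE]
      congr 1
      push_cast
      ring
    have key2 : ∀ x : ℕ → ℂ, ∀ n : ℕ,
        (x (n + τ) * Complex.exp (Complex.I * ((n + τ : ℕ) : ℂ) * (ψz : ℂ)))
          * (starRingEnd ℂ) (x n * Complex.exp (Complex.I * (n : ℂ) * (ψz : ℂ)))
        = (starRingEnd ℂ) ((x n * (starRingEnd ℂ) (x (n + τ))) * E) := by
      intro x n
      rw [← key x n]
      conv_rhs => rw [map_mul, Complex.conj_conj]
      ring
    have inner : ∑ n ∈ range (N - τ),
        ((a n * (starRingEnd ℂ) (a (n + τ)) + b n * (starRingEnd ℂ) (b (n + τ)))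
          + (a (n + τ) * (starRingEnd ℂ) (a n) + b (n + τ) * (starRingEnd ℂ) (b n)))
        = (aacf N u τ + aacf N v τ) * E
          + (starRingEnd ℂ) ((aacf N u τ + aacf N v τ) * E) := by
      simp only [ha, hb, key u, key v, key2 u, key2 v]
      rw [Finset.sum_add_distrib, Finset.sum_add_distrib, Finset.sum_add_distrib]
      rw [← map_sum, ← map_sum]
      simp only [aacf, ← Finset.sum_mul, ← map_sum, add_mul, map_add]
      try ring
    rw [inner, hGolay τ (by omega) (by omega)]
    simp
  rw [hdiag, hoff, add_zero]

open Finset Complex in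
private lemma AF2_eq (N M : ℕ) (hM : 1 ≤ M) (u vv p q : ℕ → ℂ) (W : ℕ → ℕ → ℂ)
    (h1 : ∀ n < N, ∀ m < M, W n m = u n * p m)
    (h2 : ∀ n < N, ∀ m < M, W n (M + m) = vv n * (starRingEnd ℂ) (q (M - 1 - m)))
    (ψy ψz : ℝ) :
    arrayFactor2 N (2 * M) W ψy ψz
      = arrayFactor N u ψz * arrayFactor M p ψy
        + arrayFactor N vv ψz
            * (Complex.exp (Complex.I * ((2 * M - 1 : ℕ) : ℂ) * (ψy : ℂ))
                * (starRingEnd ℂ) (arrayFactor M q ψy)) := by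
  unfold arrayFactor2
  have hsplit : ∀ n ∈ range N,
      ∑ m ∈ range (2 * M),
          W n m * Complex.exp (Complex.I * ((n : ℂ) * (ψz : ℂ) + (m : ℂ) * (ψy : ℂ)))
      = (u n * Complex.exp (Complex.I * (n : ℂ) * (ψz : ℂ))) * arrayFactor M p ψy
        + (vv n * Complex.exp (Complex.I * (n : ℂ) * (ψz : ℂ)))
            * (Complex.exp (Complex.I * ((2 * M - 1 : ℕ) : ℂ) * (ψy : ℂ))
                * (starRingEnd ℂ) (arrayFactor M q ψy)) := by
    intro n hn
    simp only [Finset.mem_range] at hn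
    rw [two_mul, Finset.sum_range_add]
    congr 1
    · -- first block
      rw [arrayFactor, Finset.mul_sum]
      refine Finset.sum_congr rfl fun m hm => ?_
      simp only [Finset.mem_range] at hm
      rw [h1 n hn m hm,
        show Complex.I * ((n : ℂ) * (ψz : ℂ) + (m : ℂ) * (ψy : ℂ))
          = Complex.I * (n : ℂ) * (ψz : ℂ) + Complex.I * (m : ℂ) * (ψy : ℂ) by ring,
        Complex.exp_add]
      ring
    · -- second block
      have stepA : ∀ k ∈ range M,
          W n (M + k) * Complex.exp (Complex.I * ((n : ℂ) * (ψz : ℂ) + ((M + k : ℕ) : ℂ) * (ψy : ℂ)))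
          = (vv n * Complex.exp (Complex.I * (n : ℂ) * (ψz : ℂ)))
            * ((starRingEnd ℂ) (q (M - 1 - k)) * Complex.exp (Complex.I * ((M + k : ℕ) : ℂ) * (ψy : ℂ))) := by
        intro k hk
        simp only [Finset.mem_range] at hk
        rw [h2 n hn k hk,
          show Complex.I * ((n : ℂ) * (ψz : ℂ) + ((M + k : ℕ) : ℂ) * (ψy : ℂ))
            = Complex.I * (n : ℂ) * (ψz : ℂ) + Complex.I * ((M + k : ℕ) : ℂ) * (ψy : ℂ) by ring,
          Complex.exp_add]
        ring
      rw [Finset.sum_congr rfl stepA, ← Finset.mul_sum]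
      congr 1
      -- reflect the inner sum
      have hrefl := (Finset.sum_range_reflect (fun k =>
        (starRingEnd ℂ) (q (M - 1 - k)) * Complex.exp (Complex.I * ((M + k : ℕ) : ℂ) * (ψy : ℂ))) M).symm
      rw [hrefl]
      have stepB : ∀ j ∈ range M,
          (starRingEnd ℂ) (q (M - 1 - (M - 1 - j)))
              * Complex.exp (Complex.I * ((M + (M - 1 - j) : ℕ) : ℂ) * (ψy : ℂ))
          = Complex.exp (Complex.I * ((2 * M - 1 : ℕ) : ℂ) * (ψy : ℂ))
            * (starRingEnd ℂ) (q j * Complex.exp (Complex.I * (j : ℂ) * (ψy : ℂ))) := by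
        intro j hj
        simp only [Finset.mem_range] at hj
        rw [conj_term]
        have e1 : M - 1 - (M - 1 - j) = j := by omega
        have e2 : (M + (M - 1 - j) : ℕ) = 2 * M - 1 - j := by omega
        rw [e1, e2]
        have e3 : ((2 * M - 1 - j : ℕ) : ℂ) = ((2 * M - 1 : ℕ) : ℂ) - (j : ℂ) := by
          have : j ≤ 2 * M - 1 := by omega
          push_cast [Nat.cast_sub this]
          ring
        rw [show Complex.I * ((2 * M - 1 - j : ℕ) : ℂ) * (ψy : ℂ)
            = Complex.I * ((2 * M - 1 : ℕ) : ℂ) * (ψy : ℂ) + -(Complex.I * (j : ℂ) * (ψy : ℂ)) by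
          rw [e3]; ring, Complex.exp_add]
        ring
      rw [Finset.sum_congr rfl stepB, ← Finset.mul_sum, ← map_sum,
        show M + M - 1 = 2 * M - 1 by omega]
      rfl
  rw [Finset.sum_congr rfl hsplit, Finset.sum_add_distrib, ← Finset.sum_mul, ← Finset.sum_mul]
  rfl


/-- Proposition 3, horizontal variant: expanding a one-dimensional protoarray by a
Golay complementary pair of expanders appended horizontally yields a rectangular
array whose sum power pattern is `2N` times that of the protoarray. -/
theorem ula_to_ura_expansion_horizontal (N M : ℕ) (hN : 1 ≤ N) (hM : 1 ≤ M)
    (u v wPA wPB : ℕ → ℂ) (WA WB : ℕ → ℕ → ℂ)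
    (hu : ∀ n < N, ‖u n‖ = 1) (hv : ∀ n < N, ‖v n‖ = 1)
    (hGolay : ∀ τ, 1 ≤ τ → τ < N → aacf N u τ + aacf N v τ = 0)
    (hA1 : ∀ n < N, ∀ m < M, WA n m = u n * wPA m)
    (hA2 : ∀ n < N, ∀ m < M,
      WA n (M + m) = -(v n * (starRingEnd ℂ) (wPB (M - 1 - m))))
    (hB1 : ∀ n < N, ∀ m < M, WB n m = u n * wPB m)
    (hB2 : ∀ n < N, ∀ m < M,
      WB n (M + m) = v n * (starRingEnd ℂ) (wPA (M - 1 - m)))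
    (ψy ψz : ℝ) :
    ‖arrayFactor2 N (2 * M) WA ψy ψz‖ ^ 2 +
        ‖arrayFactor2 N (2 * M) WB ψy ψz‖ ^ 2 =
      2 * N * (‖arrayFactor M wPA ψy‖ ^ 2 +
                ‖arrayFactor M wPB ψy‖ ^ 2) := by
  have hFA := AF2_eq N M hM u (fun n => -(v n)) wPA wPB WA hA1
    (fun n hn m hm => by rw [hA2 n hn m hm]; ring) ψy ψz
  have hFB := AF2_eq N M hM u v wPB wPA WB hB1 hB2 ψy ψz
  have hnegv : arrayFactor N (fun n => -(v n)) ψz = -arrayFactor N v ψz := by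
    simp [arrayFactor, neg_mul, Finset.sum_neg_distrib]
  rw [hnegv] at hFA
  set P := arrayFactor N u ψz
  set Q := arrayFactor N v ψz
  set A := arrayFactor M wPA ψy
  set B := arrayFactor M wPB ψy
  set c := Complex.exp (Complex.I * ((2 * M - 1 : ℕ) : ℂ) * (ψy : ℂ)) with hcdef
  have hc : c * (starRingEnd ℂ) c = 1 := by
    have habs : ‖c‖ = 1 := by
      rw [hcdef, Complex.norm_exp]
      simp [Complex.mul_re]
    rw [Complex.mul_conj, Complex.normSq_eq_norm_sq, habs]
    norm_num
  have hPow : P * (starRingEnd ℂ) P + Q * (starRingEnd ℂ) Q = 2 * N :=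
    golay_power N u v ψz hu hv hGolay
  have key : arrayFactor2 N (2 * M) WA ψy ψz * (starRingEnd ℂ) (arrayFactor2 N (2 * M) WA ψy ψz)
      + arrayFactor2 N (2 * M) WB ψy ψz * (starRingEnd ℂ) (arrayFactor2 N (2 * M) WB ψy ψz)
      = 2 * N * (A * (starRingEnd ℂ) A + B * (starRingEnd ℂ) B) := by
    rw [hFA, hFB]
    simp only [map_add, map_mul, map_neg, Complex.conj_conj, neg_mul]
    linear_combination (A * (starRingEnd ℂ) A + B * (starRingEnd ℂ) B) * hPow
      + (Q * (starRingEnd ℂ) Q * (A * (starRingEnd ℂ) A + B * (starRingEnd ℂ) B)) * hc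
  rw [Complex.mul_conj, Complex.mul_conj, Complex.mul_conj, Complex.mul_conj] at key
  rw [Complex.sq_norm, Complex.sq_norm, Complex.sq_norm, Complex.sq_norm]
  exact_mod_cast key
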